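/- Let M and M' be R-modules and f : M → M' an injective R-module homomorphism. If N' is a weakly classical 1-absorbing prime submodule of M' with f⁻¹(N') ≠ M, then f⁻¹(N') is a weakly classical 1-absorbing prime submodule of M. -/
import Mathlib


/-- A proper submodule `N` of `M` is weakly classical 1-absorbing prime if whenever
`abcm ∈ N` and `abcm ≠ 0` for nonunits `a, b, c ∈ R` and `m ∈ M`, then `abm ∈ N` or `cm ∈ N`. -/
def IsWeaklyClassical1AbsorbingPrime {R : Type*} [CommRing R] {M : Type*} [AddCommGroup M]
    [Module R M] (N : Submodule R M) : Prop :=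
  N ≠ ⊤ ∧ ∀ a b c : R, ∀ m : M, ¬ IsUnit a → ¬ IsUnit b → ¬ IsUnit c →
    (a * b * c) • m ∈ N → (a * b * c) • m ≠ 0 → ((a * b) • m ∈ N ∨ c • m ∈ N)

/-- A proper ideal `I` of `R` is weakly 1-absorbing prime if whenever `abc ∈ I` and
`abc ≠ 0` for nonunits `a, b, c ∈ R`, then `ab ∈ I` or `c ∈ I`. -/
def IsWeakly1AbsorbingPrimeIdeal {R : Type*} [CommRing R] (I : Ideal R) : Prop :=
  I ≠ ⊤ ∧ ∀ a b c : R, ¬ IsUnit a → ¬ IsUnit b → ¬ IsUnit c →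
    a * b * c ∈ I → a * b * c ≠ 0 → (a * b ∈ I ∨ c ∈ I)

/-- If `f : M → M'` is an injective `R`-homomorphism and `N'` is a weakly
classical 1-absorbing prime submodule of `M'` with `f⁻¹(N') ≠ M`, then `f⁻¹(N')` is a
weakly classical 1-absorbing prime submodule of `M`. -/
theorem stmt_3 {R : Type*} [CommRing R] [Nontrivial R] {M M' : Type*} [AddCommGroup M]
    [Module R M] [Nontrivial M] [AddCommGroup M'] [Module R M'] [Nontrivial M']
    (f : M →ₗ[R] M') (hf : Function.Injective f) (N' : Submodule R M')
    (hN' : IsWeaklyClassical1AbsorbingPrime N') (hproper : Submodule.comap f N' ≠ ⊤) :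
    IsWeaklyClassical1AbsorbingPrime (Submodule.comap f N') := by
  refine ⟨hproper, fun a b c m ha hb hc hmem hne => ?_⟩
  have h1 : (a * b * c) • f m ∈ N' := by
    simpa [Submodule.mem_comap, map_smul] using hmem
  have h2 : (a * b * c) • f m ≠ 0 := by
    rw [← map_smul]
    intro h
    exact hne (hf (by simpa using h))
  rcases hN'.2 a b c (f m) ha hb hc h1 h2 with h | h
  · exact Or.inl (by simpa [Submodule.mem_comap, map_smul] using h)
  · exact Or.inr (by simpa [Submodule.mem_comap, map_smul] using h)
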